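/- The σ-ideal I* on Tr satisfies the ω₂-chain condition: every pairwise disjoint family of Borel subsets of Tr none of which belongs to I* has cardinality at most ℵ₁. -/

import Mathlib

open Set MeasureTheory

/-- A subtree of `ω^{<ω}`: a set of finite sequences of naturals closed under
initial segments (prefixes). -/
def IsTree (T : Set (List ℕ)) : Prop := ∀ s ∈ T, ∀ t : List ℕ, t <+: s → t ∈ T

/-- `T` has an infinite branch. -/
def HasInfiniteBranch (T : Set (List ℕ)) : Prop :=
  ∃ x : ℕ → ℕ, ∀ n : ℕ, (List.range n).map x ∈ T

/-- A well-founded tree: a subtree of `ω^{<ω}` with no infinite branch. -/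
def IsWFTree (T : Set (List ℕ)) : Prop := IsTree T ∧ ¬ HasInfiniteBranch T

/-- The child relation of `T`: `childRel T s t` iff `s = t⌢⟨m⟩ ∈ T` for some `m`. -/
def childRel (T : Set (List ℕ)) (s t : List ℕ) : Prop := s ∈ T ∧ ∃ m : ℕ, s = t ++ [m]

/-- The canonical rank function of a well-founded tree:
`h_T ν = sup { h_T (ν⌢⟨m⟩) + 1 : ν⌢⟨m⟩ ∈ T }`. -/
noncomputable def treeRank (T : Set (List ℕ)) (ν : List ℕ) : Ordinal :=
  @dite _ (WellFounded (childRel T)) (Classical.dec _) (fun h => (h.apply ν).rank) (fun _ => 0)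

/-- `A_α`: the well-founded trees containing `⟨⟩` whose canonical rank at `⟨⟩` is `α`. -/
def Atree (α : Ordinal) : Set (Set (List ℕ)) :=
  {T | IsWFTree T ∧ [] ∈ T ∧ treeRank T [] = α}

/-- `n^{≤ n}`: the finite sequences of length at most `n` with all entries `< n`. -/
def seqBelow (n : ℕ) : Set (List ℕ) := {l | l.length ≤ n ∧ ∀ x ∈ l, x < n}

/-- The basic τ_α-open set `U(n,T)` determined by `n ∈ ℕ` and `T ∈ A_α`. -/
def Unbhd (α : Ordinal) (n : ℕ) (T : ↥(Atree α)) : Set (↥(Atree α)) :=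
  {T' | T'.1 ∩ seqBelow n = T.1 ∩ seqBelow n ∧
    ∀ ν ∈ T.1 ∩ seqBelow n, treeRank T'.1 ν = treeRank T.1 ν}

/-- The topology `τ_α` on `A_α`, generated by the sets `U(n,T)`. -/
def tauTop (α : Ordinal) : TopologicalSpace ↥(Atree α) :=
  TopologicalSpace.generateFrom {s | ∃ (n : ℕ) (T : ↥(Atree α)), s = Unbhd α n T}

/-- The standard (product) topology on `2^{ω^{<ω}}`, i.e. on `Set (List ℕ)`:
generated by the subbasic clopen cylinders `{T | l ∈ T}` and `{T | l ∉ T}`. -/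
def cylTop : TopologicalSpace (Set (List ℕ)) :=
  TopologicalSpace.generateFrom
    ({s | ∃ l : List ℕ, s = {T : Set (List ℕ) | l ∈ T}} ∪
     {s | ∃ l : List ℕ, s = {T : Set (List ℕ) | l ∉ T}})

/-- The Polish space `Tr` of all subtrees of `ω^{<ω}`. -/
def Tr : Type := {T : Set (List ℕ) // IsTree T}

/-- The standard topology of `Tr`: the subspace topology from `2^{ω^{<ω}}`. -/
def trTop : TopologicalSpace Tr := TopologicalSpace.induced Subtype.val cylTop

/-- The copy in `A_α` of a set `B ⊆ Tr`, i.e. the set `B ∩ A_α` viewed as a subset of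
the space `⟨A_α, τ_α⟩`. -/
def restrictA (α : Ordinal) (B : Set Tr) : Set ↥(Atree α) :=
  {T | (⟨T.1, T.2.1.1⟩ : Tr) ∈ B}

/-- The σ-ideal `I*` on `Tr`: `E ∈ I*` iff there is a Borel set `B ⊇ E` (in the
standard topology of `Tr`) such that `B ∩ A_α` is τ_α-meager for every countable
ordinal `α > 0`. -/
def memIstar (E : Set Tr) : Prop :=
  ∃ B : Set Tr, E ⊆ B ∧ MeasurableSet[@borel Tr trTop] B ∧
    ∀ α : Ordinal, 0 < α → α.card ≤ Cardinal.aleph0 →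
      @IsMeagre ↥(Atree α) (tauTop α) (restrictA α B)

-- ==== aux section ====
open Cardinal Topology TopologicalSpace Filter Function

lemma map_val_pmap_mk {n : ℕ} : ∀ (l : List ℕ) (h : ∀ x ∈ l, x < n),
    List.map Fin.val (l.pmap (fun x h => (⟨x, h⟩ : Fin n)) h) = l := by
  intro l
  induction l with
  | nil => intro _; rfl
  | cons a l ih =>
    intro h
    simp only [List.pmap, List.map_cons]
    rw [ih _]

lemma seqBelow_finite (n : ℕ) : (seqBelow n).Finite := by
  apply Set.Finite.subset (((List.finite_length_le (Fin n) n)).image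
    (fun l : List (Fin n) => l.map Fin.val))
  rintro l ⟨hlen, hlt⟩
  exact ⟨l.pmap (fun x h => (⟨x, h⟩ : Fin n)) hlt, by simpa using hlen, map_val_pmap_mk l hlt⟩

lemma seqBelow_mono {n m : ℕ} (h : n ≤ m) : seqBelow n ⊆ seqBelow m :=
  fun _ hl => ⟨hl.1.trans h, fun x hx => (hl.2 x hx).trans_le h⟩

lemma mem_seqBelow_self (l : List ℕ) : l ∈ seqBelow (l.length + l.sum + 1) := by
  refine ⟨by omega, fun x hx => ?_⟩
  have := List.single_le_sum (l := l) (fun _ _ => Nat.zero_le _) x hx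
  omega

lemma treeRank_eq {T : Set (List ℕ)} (h : WellFounded (childRel T)) (ν : List ℕ) :
    treeRank T ν = (h.apply ν).rank := dif_pos h

lemma wf_of_mem_Atree {α : Ordinal} (hα : α ≠ 0) {T : Set (List ℕ)} (hT : T ∈ Atree α) :
    WellFounded (childRel T) := by
  by_contra h
  have h2 := hT.2.2
  rw [treeRank, dif_neg h] at h2
  exact hα h2.symm

lemma treeRank_le {T : Set (List ℕ)} (hT : IsTree T) (h : WellFounded (childRel T)) :
    ∀ ν ∈ T, treeRank T ν ≤ treeRank T [] := by
  intro ν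
  induction ν using List.reverseRecOn with
  | nil => intro _; exact le_rfl
  | append_singleton t m ih =>
    intro hν
    have ht : t ∈ T := hT _ hν t ⟨[m], rfl⟩
    calc treeRank T (t ++ [m]) = (h.apply (t ++ [m])).rank := treeRank_eq h _
      _ ≤ (h.apply t).rank := (Acc.rank_lt_of_rel (h.apply t) ⟨hν, m, rfl⟩).le
      _ = treeRank T t := (treeRank_eq h _).symm
      _ ≤ treeRank T [] := ih ht

lemma treeRank_mem_le {α : Ordinal} (hα : α ≠ 0) (T : ↥(Atree α)) {ν : List ℕ}
    (hν : ν ∈ T.1) : treeRank T.1 ν ≤ α := by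
  have hwf := wf_of_mem_Atree hα T.2
  have := treeRank_le T.2.1.1 hwf ν hν
  rwa [T.2.2.2] at this

-- ==== Unbhd lemmas ====

lemma self_mem_Unbhd (α : Ordinal) (n : ℕ) (T : ↥(Atree α)) : T ∈ Unbhd α n T :=
  ⟨rfl, fun _ _ => rfl⟩

lemma Unbhd_subset {α : Ordinal} {n m : ℕ} (hnm : n ≤ m) {T S : ↥(Atree α)}
    (hS : S ∈ Unbhd α n T) : Unbhd α m S ⊆ Unbhd α n T := by
  rintro y ⟨h1, h2⟩
  obtain ⟨g1, g2⟩ := hS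
  have key : ∀ Z : Set (List ℕ), Z ∩ seqBelow n = (Z ∩ seqBelow m) ∩ seqBelow n := by
    intro Z
    rw [inter_assoc, Set.inter_eq_self_of_subset_right (seqBelow_mono hnm)]
  refine ⟨?_, ?_⟩
  · rw [key y.1, h1, ← key S.1, g1]
  · intro ν hν
    have hν' : ν ∈ S.1 ∩ seqBelow n := by rw [g1]; exact hν
    have hν'' : ν ∈ S.1 ∩ seqBelow m := ⟨hν'.1, seqBelow_mono hnm hν'.2⟩
    rw [h2 ν hν'', g2 ν hν]

lemma isBasis (α : Ordinal) :
    @TopologicalSpace.IsTopologicalBasis ↥(Atree α) (tauTop α)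
      {s | ∃ (n : ℕ) (T : ↥(Atree α)), s = Unbhd α n T} := by
  letI := tauTop α
  refine ⟨?_, ?_, rfl⟩
  · rintro t₁ ⟨n₁, T₁, rfl⟩ t₂ ⟨n₂, T₂, rfl⟩ x ⟨hx₁, hx₂⟩
    exact ⟨Unbhd α (max n₁ n₂) x, ⟨_, _, rfl⟩, self_mem_Unbhd _ _ _,
      subset_inter (Unbhd_subset (le_max_left _ _) hx₁)
        (Unbhd_subset (le_max_right _ _) hx₂)⟩
  · rw [Set.sUnion_eq_univ_iff]
    exact fun x => ⟨Unbhd α 0 x, ⟨0, x, rfl⟩, self_mem_Unbhd _ _ _⟩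

lemma Unbhd_eq_of_data {α : Ordinal} {n : ℕ} {T S : ↥(Atree α)}
    (h1 : T.1 ∩ seqBelow n = S.1 ∩ seqBelow n)
    (h2 : ∀ ν ∈ T.1 ∩ seqBelow n, treeRank T.1 ν = treeRank S.1 ν) :
    Unbhd α n T = Unbhd α n S := by
  ext y
  constructor <;> rintro ⟨g1, g2⟩
  · refine ⟨g1.trans h1, fun ν hν => ?_⟩
    have hν' : ν ∈ T.1 ∩ seqBelow n := (Set.ext_iff.1 h1 ν).2 hν
    rw [g2 ν hν', h2 ν hν']
  · refine ⟨g1.trans h1.symm, fun ν hν => ?_⟩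
    have hν' : ν ∈ S.1 ∩ seqBelow n := (Set.ext_iff.1 h1 ν).1 hν
    rw [g2 ν hν', ← h2 ν hν]

-- ==== countability of the basis ====

instance seqBelow_fintype (n : ℕ) : Finite ↥(seqBelow n) := (seqBelow_finite n).to_subtype

lemma countable_Iic_ordinal {α : Ordinal} (hα : α.card ≤ ℵ₀) : Countable ↥(Set.Iic α) := by
  rw [← Cardinal.mk_le_aleph0_iff]
  have hIic : Set.Iic α = Set.Iio (α + 1) := by
    ext x
    simp only [Set.mem_Iic, Set.mem_Iio, Ordinal.add_one_eq_succ, Order.lt_succ_iff]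
  rw [hIic, Ordinal.mk_Iio_ordinal, Ordinal.add_one_eq_succ, Ordinal.card_succ]
  have : α.card + 1 ≤ ℵ₀ := by
    calc α.card + 1 ≤ ℵ₀ + ℵ₀ := add_le_add hα (le_of_lt (by exact_mod_cast Cardinal.one_lt_aleph0))
      _ = ℵ₀ := Cardinal.aleph0_add_aleph0
  calc Cardinal.lift (α.card + 1) ≤ Cardinal.lift ℵ₀ := Cardinal.lift_le.2 this
    _ = ℵ₀ := Cardinal.lift_aleph0

lemma countable_basis (α : Ordinal) (hα0 : α ≠ 0) (hαc : α.card ≤ ℵ₀) :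
    Countable ↥{s : Set ↥(Atree α) | ∃ (n : ℕ) (T : ↥(Atree α)), s = Unbhd α n T} := by
  classical
  haveI := countable_Iic_ordinal hαc
  have hch : ∀ s : ↥{s : Set ↥(Atree α) | ∃ (n : ℕ) (T : ↥(Atree α)), s = Unbhd α n T},
      ∃ p : ℕ × ↥(Atree α), s.1 = Unbhd α p.1 p.2 := by
    rintro ⟨s, n, T, rfl⟩; exact ⟨(n, T), rfl⟩
  choose p hp using hch
  set code : ↥{s : Set ↥(Atree α) | ∃ (n : ℕ) (T : ↥(Atree α)), s = Unbhd α n T} →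
      Σ n : ℕ, (↥(seqBelow n) → Option ↥(Set.Iic α)) := fun s =>
    ⟨(p s).1, fun ν => if h : ν.1 ∈ (p s).2.1 then
        some ⟨treeRank (p s).2.1 ν.1, treeRank_mem_le hα0 (p s).2 h⟩ else none⟩ with hcode
  have hinj : Function.Injective code := by
    intro s₁ s₂ h
    rw [hcode] at h
    obtain ⟨hn, hf⟩ := Sigma.mk.inj_iff.1 h
    rw [← hn] at hf
    have hf' := eq_of_heq hf
    -- derive data equality
    have hdata : (p s₁).2.1 ∩ seqBelow (p s₁).1 = (p s₂).2.1 ∩ seqBelow (p s₁).1 ∧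
        ∀ ν ∈ (p s₁).2.1 ∩ seqBelow (p s₁).1,
          treeRank (p s₁).2.1 ν = treeRank (p s₂).2.1 ν := by
      constructor
      · ext ν
        constructor
        · rintro ⟨hT, hsB⟩
          have := congrFun hf' ⟨ν, hsB⟩
          rw [dif_pos hT] at this
          by_cases h2 : ν ∈ (p s₂).2.1
          · exact ⟨h2, hsB⟩
          · rw [dif_neg h2] at this; exact absurd this (by simp)
        · rintro ⟨hT, hsB⟩
          have := congrFun hf' ⟨ν, hsB⟩
          rw [dif_pos hT] at this
          by_cases h2 : ν ∈ (p s₁).2.1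
          · exact ⟨h2, hsB⟩
          · rw [dif_neg h2] at this; exact absurd this (by simp)
      · rintro ν ⟨hT, hsB⟩
        have := congrFun hf' ⟨ν, hsB⟩
        by_cases h2 : ν ∈ (p s₂).2.1
        · rw [dif_pos hT, dif_pos h2] at this
          exact congrArg Subtype.val (Option.some.inj this)
        · rw [dif_pos hT, dif_neg h2] at this; exact absurd this (by simp)
    have : s₁.1 = s₂.1 := by
      rw [hp s₁, hp s₂, ← hn]
      exact Unbhd_eq_of_data hdata.1 hdata.2
    exact Subtype.ext this
  exact hinj.countable

-- ==== continuity of the natural map `A_α → 2^{ω^{<ω}}` ====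

lemma isOpen_mem_cyl (α : Ordinal) (l : List ℕ) :
    IsOpen[tauTop α] {T : ↥(Atree α) | l ∈ T.1} := by
  letI := tauTop α
  set N := l.length + l.sum + 1 with hN
  have hl : l ∈ seqBelow N := mem_seqBelow_self l
  have heq : {T : ↥(Atree α) | l ∈ T.1} =
      ⋃ (x : ↥(Atree α)) (_ : l ∈ x.1), Unbhd α N x := by
    ext y
    simp only [mem_setOf_eq, mem_iUnion]
    constructor
    · intro hy; exact ⟨y, hy, self_mem_Unbhd _ _ _⟩
    · rintro ⟨x, hx, h1, _⟩
      have : l ∈ y.1 ∩ seqBelow N := by rw [h1]; exact ⟨hx, hl⟩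
      exact this.1
  rw [heq]
  exact isOpen_iUnion fun x => isOpen_iUnion fun _ =>
    TopologicalSpace.isOpen_generateFrom_of_mem ⟨N, x, rfl⟩

lemma isOpen_notMem_cyl (α : Ordinal) (l : List ℕ) :
    IsOpen[tauTop α] {T : ↥(Atree α) | l ∉ T.1} := by
  letI := tauTop α
  set N := l.length + l.sum + 1 with hN
  have hl : l ∈ seqBelow N := mem_seqBelow_self l
  have heq : {T : ↥(Atree α) | l ∉ T.1} =
      ⋃ (x : ↥(Atree α)) (_ : l ∉ x.1), Unbhd α N x := by
    ext y
    simp only [mem_setOf_eq, mem_iUnion]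
    constructor
    · intro hy; exact ⟨y, hy, self_mem_Unbhd _ _ _⟩
    · rintro ⟨x, hx, h1, _⟩
      intro hy
      have : l ∈ x.1 ∩ seqBelow N := by rw [← h1]; exact ⟨hy, hl⟩
      exact hx this.1
  rw [heq]
  exact isOpen_iUnion fun x => isOpen_iUnion fun _ =>
    TopologicalSpace.isOpen_generateFrom_of_mem ⟨N, x, rfl⟩

/-- the inclusion of `A_α` into `Tr` -/
noncomputable def incl (α : Ordinal) : ↥(Atree α) → Tr := fun T => ⟨T.1, T.2.1.1⟩

lemma isOpen_preimage_incl (α : Ordinal) {t : Set Tr} (ht : IsOpen[trTop] t) :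
    IsOpen[tauTop α] (incl α ⁻¹' t) := by
  letI := tauTop α
  obtain ⟨u, hu, rfl⟩ :=
    (@isOpen_induced_iff Tr (Set (List ℕ)) cylTop t Subtype.val).1 ht
  have key : ∀ u : Set (Set (List ℕ)),
      TopologicalSpace.GenerateOpen
        ({s | ∃ l : List ℕ, s = {T : Set (List ℕ) | l ∈ T}} ∪
         {s | ∃ l : List ℕ, s = {T : Set (List ℕ) | l ∉ T}}) u →
      IsOpen ((fun T : ↥(Atree α) => T.1) ⁻¹' u) := by
    intro u hu
    induction hu with
    | basic s hs =>
      rcases hs with ⟨l, rfl⟩ | ⟨l, rfl⟩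
      · exact isOpen_mem_cyl α l
      · exact isOpen_notMem_cyl α l
    | univ => exact isOpen_univ
    | inter s t _ _ ihs iht => rw [Set.preimage_inter]; exact ihs.inter iht
    | sUnion S _ ih =>
      rw [Set.preimage_sUnion]
      exact isOpen_biUnion ih
  exact key u hu

lemma measurable_incl (α : Ordinal) :
    @Measurable _ _ (@borel _ (tauTop α)) (@borel Tr trTop) (incl α) := by
  rw [show @borel Tr trTop = MeasurableSpace.generateFrom {s | IsOpen[trTop] s} from rfl]
  refine @measurable_generateFrom _ _ (@borel _ (tauTop α)) _ _ fun t ht => ?_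
  exact MeasurableSpace.measurableSet_generateFrom (isOpen_preimage_incl α ht)

-- ==== meager helpers ====

lemma isMeagre_sUnion' {X : Type*} [TopologicalSpace X] {S : Set (Set X)} (hc : S.Countable)
    (h : ∀ s ∈ S, IsMeagre s) : IsMeagre (⋃₀ S) := by
  rw [IsMeagre, Set.compl_sUnion]
  exact (countable_sInter_mem (hc.image _)).2 (by rintro t ⟨s, hs, rfl⟩; exact h s hs)

lemma isMeagre_union' {X : Type*} [TopologicalSpace X] {s t : Set X} (hs : IsMeagre s)
    (ht : IsMeagre t) : IsMeagre (s ∪ t) := by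
  rw [IsMeagre, Set.compl_union]
  exact inter_mem hs ht

/-- `I*` satisfies the `ω₂`-chain condition: every pairwise disjoint family of Borel
subsets of `Tr` none of which belongs to `I*` has cardinality at most `ℵ₁`. -/
theorem stmt11 (F : Set (Set Tr)) (hdisj : F.PairwiseDisjoint id)
    (hF : ∀ B ∈ F, MeasurableSet[@borel Tr trTop] B ∧ ¬ memIstar B) :
    Cardinal.mk F ≤ Cardinal.aleph 1 := by
  classical
  set I : Set Ordinal := {α | 0 < α ∧ α.card ≤ ℵ₀} with hI
  set Sb : (α : Ordinal) → Set (Set ↥(Atree α)) :=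
    fun α => {s | ∃ (n : ℕ) (T : ↥(Atree α)), s = Unbhd α n T} with hSbdef
  have hSb : ∀ a : ↥I, ∃ f : ↥(Sb a.1) → ℕ, Function.Injective f := by
    intro a
    haveI := countable_basis a.1 (ne_of_gt a.2.1) a.2.2
    exact Countable.exists_injective_nat _
  choose ca hca using hSb
  have main : ∀ B : ↥F, ∃ (a : ↥I) (k : ℕ), ∃ V : Set ↥(Atree a.1),
      ∃ hV : V ∈ Sb a.1, ca a ⟨V, hV⟩ = k ∧ ¬ @IsMeagre _ (tauTop a.1) V ∧
        @IsMeagre _ (tauTop a.1) (V \ restrictA a.1 B.1) := by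
    rintro ⟨B, hB⟩
    obtain ⟨hBm, hBI⟩ := hF B hB
    have hex : ∃ α : Ordinal, 0 < α ∧ α.card ≤ ℵ₀ ∧
        ¬ @IsMeagre _ (tauTop α) (restrictA α B) := by
      by_contra hno
      push_neg at hno
      exact hBI ⟨B, subset_rfl, hBm, fun α h1 h2 => hno α h1 h2⟩
    obtain ⟨α, hα0, hαc, hnm⟩ := hex
    letI := tauTop α
    letI : MeasurableSpace ↥(Atree α) := borel _
    haveI : BorelSpace ↥(Atree α) := ⟨rfl⟩
    set s : Set ↥(Atree α) := restrictA α B with hs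
    have hsm : MeasurableSet s := measurable_incl α hBm
    have hbm : BaireMeasurableSet s := hsm.baireMeasurableSet
    obtain ⟨u, huo, hsu⟩ := hbm.residualEq_isOpen
    have hm : {x | x ∈ s ↔ x ∈ u} ∈ residual ↥(Atree α) := by
      rw [Filter.eventuallyEq_set] at hsu
      exact hsu
    have hmc : IsMeagre {x | x ∈ s ↔ x ∈ u}ᶜ := by
      rw [IsMeagre, compl_compl]; exact hm
    have hunm : ¬ IsMeagre u := by
      intro hu
      apply hnm
      refine Filter.mem_of_superset (Filter.inter_mem hu hm) ?_
      rintro x ⟨hxu, hxm⟩ hxs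
      exact hxu (hxm.1 hxs)
    obtain ⟨S', hS'sub, huS⟩ := (isBasis α).open_eq_sUnion huo
    have hS'c : S'.Countable := by
      haveI := countable_basis α (ne_of_gt hα0) hαc
      exact Set.Countable.mono hS'sub (Set.countable_coe_iff.2 ‹_›)
    have hVex : ∃ V ∈ S', ¬ IsMeagre V := by
      by_contra hall
      push_neg at hall
      exact hunm (huS ▸ isMeagre_sUnion' hS'c hall)
    obtain ⟨V, hVS', hVnm⟩ := hVex
    have hVb : V ∈ Sb α := hS'sub hVS'
    refine ⟨⟨α, hα0, hαc⟩, ca ⟨α, hα0, hαc⟩ ⟨V, hVb⟩, V, hVb, rfl, hVnm, ?_⟩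
    refine hmc.mono ?_
    rintro x ⟨hxV, hxs⟩ hiff
    refine hxs (hiff.2 ?_)
    rw [huS]
    exact Set.subset_sUnion_of_mem hVS' hxV
  choose af kf hP using main
  have hinj : Function.Injective (fun B : ↥F => ((af B, kf B) : ↥I × ℕ)) := by
    intro B₁ B₂ h
    by_contra hne
    have hBne : B₁.1 ≠ B₂.1 := fun hh => hne (Subtype.ext hh)
    have ha : af B₁ = af B₂ := congrArg Prod.fst h
    have hk : kf B₁ = kf B₂ := congrArg Prod.snd h
    have hP1 := hP B₁
    have hP2 := hP B₂
    rw [← ha, ← hk] at hP2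
    obtain ⟨V₁, hV₁, hc₁, hnm₁, hm₁⟩ := hP1
    obtain ⟨V₂, hV₂, hc₂, hnm₂, hm₂⟩ := hP2
    have hVeq : V₂ = V₁ := by
      have := hca (af B₁) (hc₂.trans hc₁.symm)
      exact congrArg Subtype.val this
    rw [hVeq] at hm₂
    have hdis : ∀ x, x ∈ restrictA (af B₁).1 B₁.1 → x ∈ restrictA (af B₁).1 B₂.1 → False := by
      intro x hx1 hx2
      exact Set.disjoint_left.1 (hdisj B₁.2 B₂.2 hBne) hx1 hx2
    apply hnm₁
    letI := tauTop (af B₁).1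
    have hsub : V₁ ⊆ (V₁ \ restrictA (af B₁).1 B₁.1) ∪ (V₁ \ restrictA (af B₁).1 B₂.1) := by
      intro x hx
      by_cases hx1 : x ∈ restrictA (af B₁).1 B₁.1
      · right; exact ⟨hx, fun hx2 => hdis x hx1 hx2⟩
      · left; exact ⟨hx, hx1⟩
    exact (isMeagre_union' hm₁ hm₂).mono hsub
  have h1 : Cardinal.lift.{1} (Cardinal.mk ↥F) ≤ Cardinal.lift.{0} (Cardinal.mk (↥I × ℕ)) :=
    Cardinal.lift_mk_le'.2 ⟨⟨_, hinj⟩⟩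
  rw [Cardinal.lift_uzero] at h1
  have hIcard : Cardinal.mk ↥I ≤ Cardinal.lift.{1,0} (Cardinal.aleph 1) := by
    have hsub : I ⊆ Set.Iio ((Cardinal.aleph 1).ord) := by
      rintro α ⟨h0, hc⟩
      rw [Set.mem_Iio, Cardinal.lt_ord, ← Cardinal.succ_aleph0, Order.lt_succ_iff]
      exact hc
    calc Cardinal.mk ↥I ≤ Cardinal.mk ↥(Set.Iio ((Cardinal.aleph 1).ord)) :=
          Cardinal.mk_le_mk_of_subset hsub
      _ = Cardinal.lift.{1} ((Cardinal.aleph 1).ord).card := Ordinal.mk_Iio_ordinal _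
      _ = Cardinal.lift.{1,0} (Cardinal.aleph 1) := by rw [Cardinal.card_ord]
  have h2 : Cardinal.mk (↥I × ℕ) ≤ Cardinal.lift.{1,0} (Cardinal.aleph 1) := by
    calc Cardinal.mk (↥I × ℕ)
        = Cardinal.lift.{0} (Cardinal.mk ↥I) * Cardinal.lift.{1} (Cardinal.mk ℕ) :=
          Cardinal.mk_prod _ _
      _ = Cardinal.mk ↥I * ℵ₀ := by
          rw [Cardinal.lift_uzero, Cardinal.mk_nat, Cardinal.lift_aleph0]
      _ ≤ Cardinal.lift.{1,0} (Cardinal.aleph 1) * Cardinal.lift.{1,0} (Cardinal.aleph 1) := by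
          refine mul_le_mul' hIcard (Cardinal.aleph0_le_lift.2 (Cardinal.aleph0_le_aleph 1))
      _ = Cardinal.lift.{1,0} (Cardinal.aleph 1) := by
          rw [← Cardinal.lift_mul, Cardinal.mul_eq_self (Cardinal.aleph0_le_aleph 1)]
  exact Cardinal.lift_le.1 (h1.trans h2)
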